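/- Let q₀,...,qₙ be positive integers, δ = lcm(q₀,...,qₙ), and for i = 1,...,n let wᵢ ∈ ℝ^{n+1} be the vector with coordinate −δ/q₀ in position 0, coordinate δ/qᵢ in position i, and 0 elsewhere. Then the generalized cross product w₁ × ⋯ × wₙ equals the vector whose i-th coordinate is δⁿ/(q₀⋯qₙ/qᵢ) = δⁿ·qᵢ/(q₀q₁⋯qₙ) ... i.e. the vector (δⁿ/(q₁⋯qₙ), δⁿ/(q₀q₂⋯qₙ), ..., δⁿ/(q₀⋯q_{n−1})). In particular its Euclidean norm is (δⁿ/(q₀⋯qₙ))·√(q₀² + ⋯ + qₙ²). -/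

import Mathlib

/-- Generalized cross product of `n` vectors in `ℝ^{n+1}`: the `k`-th coordinate is
`(-1)^k` times the `n × n` minor obtained by deleting column `k` from the matrix whose
rows are the given vectors. -/
def crossProd {n : ℕ} (v : Fin n → Fin (n + 1) → ℝ) : Fin (n + 1) → ℝ :=
  fun k => (-1) ^ (k : ℕ) * Matrix.det (Matrix.of fun i j : Fin n => v i (Fin.succAbove k j))

/-- The vectors `wᵢ = -(δ/q₀)ê₀ + (δ/qᵢ)êᵢ`, `i = 1,...,n`. -/
noncomputable def wvec {n : ℕ} (q : Fin (n + 1) → ℕ) (δ : ℕ) : Fin n → Fin (n + 1) → ℝ :=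
  fun i j => if (j : ℕ) = 0 then -((δ : ℝ) / (q 0 : ℝ))
    else if (j : ℕ) = (i : ℕ) + 1 then (δ : ℝ) / (q j : ℝ) else 0

/-- The cross product of the `wᵢ` is the vector with `i`-th coordinate
`δⁿ·qᵢ/(q₀⋯qₙ)`, and its Euclidean norm is `(δⁿ/(q₀⋯qₙ))·√(q₀²+⋯+qₙ²)`. -/

lemma crossProd_wvec_zero {n : ℕ} (q : Fin (n + 1) → ℕ) (δ : ℕ) :
    crossProd (wvec q δ) 0 = ∏ i : Fin n, ((δ : ℝ) / (q i.succ : ℝ)) := by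
  have h : (Matrix.of fun i j : Fin n => wvec q δ i (Fin.succAbove 0 j))
      = Matrix.diagonal (fun i : Fin n => (δ : ℝ) / (q i.succ : ℝ)) := by
    ext i j
    rw [Matrix.of_apply, Matrix.diagonal_apply]
    simp only [wvec, Fin.succAbove_zero, Fin.val_succ]
    by_cases hij : i = j
    · subst hij; simp
    · have h2 : ¬ ((j : ℕ) + 1 = (i : ℕ) + 1) := fun h => hij (Fin.ext (by omega))
      simp [h2, hij]
      intro h; exact absurd (Fin.ext h.symm) hij
  simp only [crossProd]
  rw [h, Matrix.det_diagonal]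
  simp

lemma sum_rel {n : ℕ} (q : Fin (n + 1) → ℕ) (δ : ℕ) (i : Fin n) :
    ∑ k, wvec q δ i k * crossProd (wvec q δ) k = 0 := by
  set W : Matrix (Fin (n + 1)) (Fin (n + 1)) ℝ :=
    Matrix.of (Fin.cons (wvec q δ i) (wvec q δ)) with hW
  have hdet : W.det = 0 := by
    apply Matrix.det_zero_of_row_eq (i := 0) (j := i.succ) (Fin.succ_ne_zero i).symm
    funext x
    simp [hW, Matrix.of_apply, Fin.cons_zero, Fin.cons_succ]
  rw [Matrix.det_succ_row_zero] at hdet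
  have : ∀ j : Fin (n + 1),
      (-1 : ℝ) ^ (j : ℕ) * W 0 j * (W.submatrix Fin.succ j.succAbove).det
      = wvec q δ i j * crossProd (wvec q δ) j := by
    intro j
    have hsub : W.submatrix Fin.succ j.succAbove
        = Matrix.of fun a b : Fin n => wvec q δ a (Fin.succAbove j b) := by
      ext a b; simp [hW, Matrix.submatrix_apply]
    rw [hsub]
    have : W 0 j = wvec q δ i j := by simp [hW]
    rw [this, crossProd]; ring
  rw [Finset.sum_congr rfl (fun j _ => this j)] at hdet
  exact hdet

theorem crossProd_wvec {n : ℕ} (q : Fin (n + 1) → ℕ) (hq : ∀ i, 0 < q i) :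
    crossProd (wvec q (Finset.univ.lcm q)) =
      (fun i => ((Finset.univ.lcm q : ℕ) : ℝ) ^ n * (q i : ℝ) / ∏ j, (q j : ℝ)) ∧
    Real.sqrt (∑ i, (crossProd (wvec q (Finset.univ.lcm q)) i) ^ 2) =
      ((Finset.univ.lcm q : ℕ) : ℝ) ^ n / (∏ j, (q j : ℝ)) *
        Real.sqrt (∑ i, (q i : ℝ) ^ 2) := by
  set δ : ℕ := Finset.univ.lcm q with hδdef
  have hδnat : δ ≠ 0 := by
    rw [hδdef]
    simp only [ne_eq, Finset.lcm_eq_zero_iff]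
    intro h
    obtain ⟨i, -, hi⟩ := h
    exact (hq i).ne' hi
  have hδ : (δ : ℝ) ≠ 0 := Nat.cast_ne_zero.mpr hδnat
  have hqi : ∀ i : Fin (n + 1), (q i : ℝ) ≠ 0 := fun i => Nat.cast_ne_zero.mpr (hq i).ne'
  have hP : (∏ j, (q j : ℝ)) ≠ 0 := Finset.prod_ne_zero_iff.mpr fun j _ => hqi j
  have hPs : (∏ i : Fin n, (q i.succ : ℝ)) ≠ 0 := Finset.prod_ne_zero_iff.mpr fun j _ => hqi _
  have hc0 : crossProd (wvec q δ) 0 = (δ : ℝ) ^ n * q 0 / ∏ j, (q j : ℝ) := by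
    rw [crossProd_wvec_zero, Fin.prod_univ_succ (f := fun j => (q j : ℝ)),
      Finset.prod_div_distrib, Finset.prod_const]
    simp only [Finset.card_univ, Fintype.card_fin]
    rw [show ((δ : ℝ)) ^ n * q 0 = q 0 * (δ : ℝ) ^ n by ring,
      mul_div_mul_left _ _ (hqi 0)]
  have hmain : crossProd (wvec q δ) = fun i => (δ : ℝ) ^ n * q i / ∏ j, (q j : ℝ) := by
    funext k
    induction k using Fin.cases with
    | zero => exact hc0
    | succ i =>
      have hrel := sum_rel q δ i
      have heval : ∑ k, wvec q δ i k * crossProd (wvec q δ) k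
          = -((δ : ℝ) / q 0) * crossProd (wvec q δ) 0
            + ((δ : ℝ) / q i.succ) * crossProd (wvec q δ) i.succ := by
        have hterm : ∀ k : Fin (n + 1), wvec q δ i k * crossProd (wvec q δ) k
            = (if k = 0 then -((δ : ℝ) / q 0) * crossProd (wvec q δ) 0 else 0)
              + (if k = i.succ then ((δ : ℝ) / q i.succ) * crossProd (wvec q δ) i.succ
                  else 0) := by
          intro k
          rcases eq_or_ne k 0 with rfl | hk0
          · simp [wvec, (Fin.succ_ne_zero i).symm]
          · rcases eq_or_ne k i.succ with rfl | hki
            · simp [wvec, Fin.val_succ, Fin.succ_ne_zero i]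
            · have h1 : (k : ℕ) ≠ 0 := fun h => hk0 (Fin.ext h)
              have h2 : (k : ℕ) ≠ (i : ℕ) + 1 := fun h =>
                hki (Fin.ext (by simpa [Fin.val_succ] using h))
              simp [wvec, h1, h2, hk0, hki]
        rw [Finset.sum_congr rfl fun k _ => hterm k, Finset.sum_add_distrib]
        simp
      rw [heval] at hrel
      have hE : ((δ : ℝ) / q i.succ) * crossProd (wvec q δ) i.succ
          = ((δ : ℝ) / q 0) * ((δ : ℝ) ^ n * q 0 / ∏ j, (q j : ℝ)) := by
        rw [← hc0]; linarith
      have hne : ((δ : ℝ) / q i.succ) ≠ 0 := div_ne_zero hδ (hqi _)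
      apply mul_left_cancel₀ hne
      rw [hE]
      field_simp
      rw [div_self (hqi 0), div_self (hqi i.succ)]
  refine ⟨hmain, ?_⟩
  have hsum : ∑ i, (crossProd (wvec q δ) i) ^ 2
      = ((δ : ℝ) ^ n / ∏ j, (q j : ℝ)) ^ 2 * ∑ i, (q i : ℝ) ^ 2 := by
    simp only [hmain]
    rw [Finset.mul_sum]
    refine Finset.sum_congr rfl fun i _ => ?_
    field_simp
  have hnn : (0 : ℝ) ≤ (δ : ℝ) ^ n / ∏ j, (q j : ℝ) := by
    apply div_nonneg (by positivity)
    exact Finset.prod_nonneg fun j _ => Nat.cast_nonneg _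
  rw [hsum, Real.sqrt_mul (sq_nonneg _), Real.sqrt_sq hnn]
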